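/- The map Φ defined recursively on 12-3-avoiding permutations by Φ(π', n, π'') = (reverse(π'), n, Φ(π'')), where n is the maximal entry of the permutation and π', π'' are the segments before and after it, is a bijection from the set of 12-3-avoiding permutations of {1,...,n} onto the set of 21-3-avoiding permutations of {1,...,n}, and satisfies Φ∘Φ = identity. -/

import Mathlib

/-- Number of occurrences of the generalized pattern 12-3 in a word (list). -/
def listOcc12_3 (l : List ℕ) : ℕ :=
  ((Finset.range l.length ×ˢ Finset.range l.length).filter (fun p =>
    p.1 + 1 < p.2 ∧ l.getD p.1 0 < l.getD (p.1 + 1) 0 ∧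
      l.getD (p.1 + 1) 0 < l.getD p.2 0)).card

/-- Number of occurrences of the generalized pattern 21-3 in a word (list). -/
def listOcc21_3 (l : List ℕ) : ℕ :=
  ((Finset.range l.length ×ˢ Finset.range l.length).filter (fun p =>
    p.1 + 1 < p.2 ∧ l.getD (p.1 + 1) 0 < l.getD p.1 0 ∧
      l.getD p.1 0 < l.getD p.2 0)).card

def Avoid12 (l : List ℕ) : Prop :=
  ∀ i j : ℕ, i + 1 < j → j < l.length →
    ¬(l.getD i 0 < l.getD (i + 1) 0 ∧ l.getD (i + 1) 0 < l.getD j 0)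

def Avoid21 (l : List ℕ) : Prop :=
  ∀ i j : ℕ, i + 1 < j → j < l.length →
    ¬(l.getD (i + 1) 0 < l.getD i 0 ∧ l.getD i 0 < l.getD j 0)

lemma occ12_zero (l : List ℕ) : listOcc12_3 l = 0 ↔ Avoid12 l := by
  unfold listOcc12_3 Avoid12
  rw [Finset.card_eq_zero, Finset.filter_eq_empty_iff]
  constructor
  · intro h i j hij hj hcond
    have hmem : (i, j) ∈ Finset.range l.length ×ˢ Finset.range l.length := by
      simp only [Finset.mem_product, Finset.mem_range]
      omega
    exact h hmem ⟨hij, hcond.1, hcond.2⟩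
  · intro h p hp hcond
    simp only [Finset.mem_product, Finset.mem_range] at hp
    exact h p.1 p.2 hcond.1 hp.2 ⟨hcond.2.1, hcond.2.2⟩

lemma occ21_zero (l : List ℕ) : listOcc21_3 l = 0 ↔ Avoid21 l := by
  unfold listOcc21_3 Avoid21
  rw [Finset.card_eq_zero, Finset.filter_eq_empty_iff]
  constructor
  · intro h i j hij hj hcond
    have hmem : (i, j) ∈ Finset.range l.length ×ˢ Finset.range l.length := by
      simp only [Finset.mem_product, Finset.mem_range]
      omega
    exact h hmem ⟨hij, hcond.1, hcond.2⟩
  · intro h p hp hcond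
    simp only [Finset.mem_product, Finset.mem_range] at hp
    exact h p.1 p.2 hcond.1 hp.2 ⟨hcond.2.1, hcond.2.2⟩

lemma avoid12_nil : Avoid12 [] := fun _ j _ hj => by simp at hj

lemma avoid21_nil : Avoid21 [] := fun _ j _ hj => by simp at hj

lemma getD_low (l₁ l₂ : List ℕ) (m i : ℕ) (h : i < l₁.length) :
    (l₁ ++ m :: l₂).getD i 0 = l₁.getD i 0 := List.getD_append _ _ _ _ h

lemma getD_mid (l₁ l₂ : List ℕ) (m : ℕ) :
    (l₁ ++ m :: l₂).getD l₁.length 0 = m := by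
  rw [List.getD_append_right _ _ _ _ le_rfl]
  simp

lemma getD_high (l₁ l₂ : List ℕ) (m t : ℕ) :
    (l₁ ++ m :: l₂).getD (l₁.length + 1 + t) 0 = l₂.getD t 0 := by
  rw [List.getD_append_right _ _ _ _ (by omega)]
  have h : l₁.length + 1 + t - l₁.length = t + 1 := by omega
  rw [h, List.getD_cons_succ]

lemma getD_mem_lt (l : List ℕ) (m i : ℕ) (h : ∀ x ∈ l, x < m) (hi : i < l.length) :
    l.getD i 0 < m := by
  rw [List.getD_eq_getElem _ _ hi]
  exact h _ (List.getElem_mem hi)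

lemma len_split (l₁ l₂ : List ℕ) (m : ℕ) :
    (l₁ ++ m :: l₂).length = l₁.length + 1 + l₂.length := by
  simp; omega

lemma chain'_le_getD (l : List ℕ) (hc : l.Chain' (· ≤ ·)) (i : ℕ) (h : i + 1 < l.length) :
    l.getD i 0 ≤ l.getD (i + 1) 0 := by
  replace hc := List.isChain_iff_getElem.mp hc
  have hch := hc i (by omega)
  rw [List.getD_eq_getElem l 0 (show i < l.length by omega), List.getD_eq_getElem l 0 h]
  exact hch

lemma chain'_ge_getD (l : List ℕ) (hc : l.Chain' (· ≥ ·)) (i : ℕ) (h : i + 1 < l.length) :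
    l.getD (i + 1) 0 ≤ l.getD i 0 := by
  replace hc := List.isChain_iff_getElem.mp hc
  have hch := hc i (by omega)
  rw [List.getD_eq_getElem l 0 (show i < l.length by omega), List.getD_eq_getElem l 0 h]
  exact hch

lemma avoid12_split (l₁ l₂ : List ℕ) (m : ℕ) (h1 : ∀ x ∈ l₁, x < m)
    (h : Avoid12 (l₁ ++ m :: l₂)) : l₁.Chain' (· ≥ ·) ∧ Avoid12 l₂ := by
  have hlen := len_split l₁ l₂ m
  constructor
  · refine List.isChain_iff_getElem.mpr ?_
    intro i hi
    by_contra hlt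
    push_neg at hlt
    refine h i l₁.length (by omega) (by omega) ⟨?_, ?_⟩
    · rw [getD_low _ _ _ _ (by omega), getD_low _ _ _ _ (by omega),
        List.getD_eq_getElem _ _ (show i < l₁.length by omega),
        List.getD_eq_getElem _ _ (show i + 1 < l₁.length by omega)]
      simpa [List.get_eq_getElem] using hlt
    · rw [getD_low _ _ _ _ (by omega), getD_mid]
      exact getD_mem_lt _ _ _ h1 (by omega)
  · intro i j hij hj hcond
    have e1 : (l₁ ++ m :: l₂).getD (l₁.length + 1 + i) 0 = l₂.getD i 0 :=
      getD_high l₁ l₂ m i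
    have e2 : (l₁ ++ m :: l₂).getD (l₁.length + 1 + i + 1) 0 = l₂.getD (i + 1) 0 :=
      getD_high l₁ l₂ m (i + 1)
    have e3 : (l₁ ++ m :: l₂).getD (l₁.length + 1 + j) 0 = l₂.getD j 0 :=
      getD_high l₁ l₂ m j
    refine h (l₁.length + 1 + i) (l₁.length + 1 + j) (by omega) (by omega) ?_
    rw [e1, e2, e3]
    exact hcond

lemma avoid21_split (l₁ l₂ : List ℕ) (m : ℕ) (h1 : ∀ x ∈ l₁, x < m)
    (h : Avoid21 (l₁ ++ m :: l₂)) : l₁.Chain' (· ≤ ·) ∧ Avoid21 l₂ := by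
  have hlen := len_split l₁ l₂ m
  constructor
  · refine List.isChain_iff_getElem.mpr ?_
    intro i hi
    by_contra hlt
    push_neg at hlt
    refine h i l₁.length (by omega) (by omega) ⟨?_, ?_⟩
    · rw [getD_low _ _ _ _ (by omega), getD_low _ _ _ _ (by omega),
        List.getD_eq_getElem _ _ (show i + 1 < l₁.length by omega),
        List.getD_eq_getElem _ _ (show i < l₁.length by omega)]
      simpa [List.get_eq_getElem] using hlt
    · rw [getD_low _ _ _ _ (by omega), getD_mid]
      exact getD_mem_lt _ _ _ h1 (by omega)
  · intro i j hij hj hcond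
    have e1 : (l₁ ++ m :: l₂).getD (l₁.length + 1 + i) 0 = l₂.getD i 0 :=
      getD_high l₁ l₂ m i
    have e2 : (l₁ ++ m :: l₂).getD (l₁.length + 1 + i + 1) 0 = l₂.getD (i + 1) 0 :=
      getD_high l₁ l₂ m (i + 1)
    have e3 : (l₁ ++ m :: l₂).getD (l₁.length + 1 + j) 0 = l₂.getD j 0 :=
      getD_high l₁ l₂ m j
    refine h (l₁.length + 1 + i) (l₁.length + 1 + j) (by omega) (by omega) ?_
    rw [e1, e2, e3]
    exact hcond

lemma avoid21_build (l₁ l₂ : List ℕ) (m : ℕ) (h1 : ∀ x ∈ l₁, x < m)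
    (h2 : ∀ x ∈ l₂, x < m) (hc : l₁.Chain' (· ≤ ·)) (ha : Avoid21 l₂) :
    Avoid21 (l₁ ++ m :: l₂) := by
  intro i j hij hj hcond
  have hlen := len_split l₁ l₂ m
  rw [hlen] at hj
  rcases lt_trichotomy (i + 1) l₁.length with hi | hi | hi
  · have e0 := getD_low l₁ l₂ m i (by omega)
    have e1 := getD_low l₁ l₂ m (i + 1) hi
    rw [e0, e1] at hcond
    have hch := chain'_le_getD l₁ hc i (by omega)
    omega
  · have e1 : (l₁ ++ m :: l₂).getD (i + 1) 0 = m := by rw [hi]; exact getD_mid l₁ l₂ m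
    have e0 := getD_low l₁ l₂ m i (by omega)
    rw [e0, e1] at hcond
    have := getD_mem_lt l₁ m i h1 (by omega)
    omega
  · rcases eq_or_lt_of_le (show l₁.length ≤ i by omega) with hi2 | hi2
    · have e0 : (l₁ ++ m :: l₂).getD i 0 = m := by rw [← hi2]; exact getD_mid l₁ l₂ m
      obtain ⟨s, rfl⟩ : ∃ s, j = l₁.length + 1 + s := ⟨j - l₁.length - 1, by omega⟩
      have e2 : (l₁ ++ m :: l₂).getD (l₁.length + 1 + s) 0 = l₂.getD s 0 :=
        getD_high l₁ l₂ m s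
      rw [e0, e2] at hcond
      have := getD_mem_lt l₂ m s h2 (by omega)
      omega
    · obtain ⟨t, rfl⟩ : ∃ t, i = l₁.length + 1 + t := ⟨i - l₁.length - 1, by omega⟩
      obtain ⟨s, rfl⟩ : ∃ s, j = l₁.length + 1 + s := ⟨j - l₁.length - 1, by omega⟩
      have e0 : (l₁ ++ m :: l₂).getD (l₁.length + 1 + t) 0 = l₂.getD t 0 :=
        getD_high l₁ l₂ m t
      have e1 : (l₁ ++ m :: l₂).getD (l₁.length + 1 + t + 1) 0 = l₂.getD (t + 1) 0 :=
        getD_high l₁ l₂ m (t + 1)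
      have e2 : (l₁ ++ m :: l₂).getD (l₁.length + 1 + s) 0 = l₂.getD s 0 :=
        getD_high l₁ l₂ m s
      rw [e0, e1, e2] at hcond
      exact ha t s (by omega) (by omega) hcond

lemma avoid12_build (l₁ l₂ : List ℕ) (m : ℕ) (h1 : ∀ x ∈ l₁, x < m)
    (h2 : ∀ x ∈ l₂, x < m) (hc : l₁.Chain' (· ≥ ·)) (ha : Avoid12 l₂) :
    Avoid12 (l₁ ++ m :: l₂) := by
  intro i j hij hj hcond
  have hlen := len_split l₁ l₂ m
  rw [hlen] at hj
  rcases lt_trichotomy (i + 1) l₁.length with hi | hi | hi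
  · have e0 := getD_low l₁ l₂ m i (by omega)
    have e1 := getD_low l₁ l₂ m (i + 1) hi
    rw [e0, e1] at hcond
    have hch := chain'_ge_getD l₁ hc i (by omega)
    omega
  · have e1 : (l₁ ++ m :: l₂).getD (i + 1) 0 = m := by rw [hi]; exact getD_mid l₁ l₂ m
    rw [e1] at hcond
    obtain ⟨s, rfl⟩ : ∃ s, j = l₁.length + 1 + s := ⟨j - l₁.length - 1, by omega⟩
    have e2 : (l₁ ++ m :: l₂).getD (l₁.length + 1 + s) 0 = l₂.getD s 0 :=
      getD_high l₁ l₂ m s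
    rw [e2] at hcond
    have := getD_mem_lt l₂ m s h2 (by omega)
    omega
  · rcases eq_or_lt_of_le (show l₁.length ≤ i by omega) with hi2 | hi2
    · have e0 : (l₁ ++ m :: l₂).getD i 0 = m := by rw [← hi2]; exact getD_mid l₁ l₂ m
      have e1 : (l₁ ++ m :: l₂).getD (i + 1) 0 = l₂.getD 0 0 := by
        rw [show i + 1 = l₁.length + 1 + 0 by omega]; exact getD_high l₁ l₂ m 0
      rw [e0, e1] at hcond
      have := getD_mem_lt l₂ m 0 h2 (by omega)
      omega
    · obtain ⟨t, rfl⟩ : ∃ t, i = l₁.length + 1 + t := ⟨i - l₁.length - 1, by omega⟩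
      obtain ⟨s, rfl⟩ : ∃ s, j = l₁.length + 1 + s := ⟨j - l₁.length - 1, by omega⟩
      have e0 : (l₁ ++ m :: l₂).getD (l₁.length + 1 + t) 0 = l₂.getD t 0 :=
        getD_high l₁ l₂ m t
      have e1 : (l₁ ++ m :: l₂).getD (l₁.length + 1 + t + 1) 0 = l₂.getD (t + 1) 0 :=
        getD_high l₁ l₂ m (t + 1)
      have e2 : (l₁ ++ m :: l₂).getD (l₁.length + 1 + s) 0 = l₂.getD s 0 :=
        getD_high l₁ l₂ m s
      rw [e0, e1, e2] at hcond
      exact ha t s (by omega) (by omega) hcond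

lemma exists_max (l : List ℕ) (h : l ≠ []) : ∃ m ∈ l, ∀ x ∈ l, x ≤ m := by
  induction l with
  | nil => simp at h
  | cons a t ih =>
    rcases eq_or_ne t [] with rfl | ht
    · exact ⟨a, by simp, by simp⟩
    · obtain ⟨m, hm, hmax⟩ := ih ht
      rcases le_total a m with hle | hle
      · refine ⟨m, by simp [hm], ?_⟩
        intro x hx
        rcases List.mem_cons.mp hx with rfl | hx
        · exact hle
        · exact hmax x hx
      · refine ⟨a, by simp, ?_⟩
        intro x hx
        rcases List.mem_cons.mp hx with rfl | hx
        · exact le_rfl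
        · exact (hmax x hx).trans hle

lemma key (Φ : List ℕ → List ℕ) (h0 : Φ [] = [])
    (hrec : ∀ (l₁ l₂ : List ℕ) (m : ℕ),
      (∀ x ∈ l₁, x < m) → (∀ x ∈ l₂, x < m) →
      Φ (l₁ ++ m :: l₂) = l₁.reverse ++ m :: Φ l₂) :
    ∀ N l, l.length ≤ N → l.Nodup →
      ((Avoid12 l → (Φ l).Perm l ∧ Avoid21 (Φ l) ∧ Φ (Φ l) = l) ∧
       (Avoid21 l → (Φ l).Perm l ∧ Avoid12 (Φ l) ∧ Φ (Φ l) = l)) := by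
  intro N
  induction N with
  | zero =>
    intro l hl _
    have : l = [] := List.length_eq_zero_iff.mp (Nat.le_zero.mp hl)
    subst this
    rw [h0]
    exact ⟨fun _ => ⟨List.Perm.refl _, avoid21_nil, by rw [h0]⟩,
      fun _ => ⟨List.Perm.refl _, avoid12_nil, by rw [h0]⟩⟩
  | succ N ih =>
    intro l hl hnd
    rcases eq_or_ne l [] with rfl | hne
    · rw [h0]
      exact ⟨fun _ => ⟨List.Perm.refl _, avoid21_nil, by rw [h0]⟩,
        fun _ => ⟨List.Perm.refl _, avoid12_nil, by rw [h0]⟩⟩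
    · obtain ⟨m, hm, hmax⟩ := exists_max l hne
      obtain ⟨l₁, l₂, rfl⟩ := List.append_of_mem hm
      have hnd' := hnd
      rw [List.nodup_append] at hnd'
      have hm1 : m ∉ l₁ := fun hx => (hnd'.2.2 m hx m (by simp) rfl).elim
      have hm2 : m ∉ l₂ := by
        have := hnd'.2.1
        rw [List.nodup_cons] at this
        exact this.1
      have h1 : ∀ x ∈ l₁, x < m := fun x hx =>
        lt_of_le_of_ne (hmax x (by simp [hx])) (fun he => hm1 (he ▸ hx))
      have h2 : ∀ x ∈ l₂, x < m := fun x hx =>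
        lt_of_le_of_ne (hmax x (by simp [hx])) (fun he => hm2 (he ▸ hx))
      have hnd2 : l₂.Nodup := by
        have := hnd'.2.1
        rw [List.nodup_cons] at this
        exact this.2
      have hlen := len_split l₁ l₂ m
      have IH := ih l₂ (by omega) hnd2
      have hΦ : Φ (l₁ ++ m :: l₂) = l₁.reverse ++ m :: Φ l₂ := hrec l₁ l₂ m h1 h2
      constructor
      · intro hA
        obtain ⟨hc, hA2⟩ := avoid12_split l₁ l₂ m h1 hA
        obtain ⟨hp2, hA2', hΦΦ2⟩ := IH.1 hA2
        have h2' : ∀ x ∈ Φ l₂, x < m := fun x hx => h2 x (hp2.subset hx)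
        have h1' : ∀ x ∈ l₁.reverse, x < m := fun x hx => h1 x (List.mem_reverse.mp hx)
        refine ⟨?_, ?_, ?_⟩
        · rw [hΦ]
          exact (l₁.reverse_perm).append (hp2.cons m)
        · rw [hΦ]
          refine avoid21_build _ _ _ h1' h2' ?_ hA2'
          exact List.isChain_reverse.mpr hc
        · rw [hΦ, hrec _ _ _ h1' h2', List.reverse_reverse, hΦΦ2]
      · intro hA
        obtain ⟨hc, hA2⟩ := avoid21_split l₁ l₂ m h1 hA
        obtain ⟨hp2, hA2', hΦΦ2⟩ := IH.2 hA2
        have h2' : ∀ x ∈ Φ l₂, x < m := fun x hx => h2 x (hp2.subset hx)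
        have h1' : ∀ x ∈ l₁.reverse, x < m := fun x hx => h1 x (List.mem_reverse.mp hx)
        refine ⟨?_, ?_, ?_⟩
        · rw [hΦ]
          exact (l₁.reverse_perm).append (hp2.cons m)
        · rw [hΦ]
          refine avoid12_build _ _ _ h1' h2' ?_ hA2'
          exact List.isChain_reverse.mpr hc
        · rw [hΦ, hrec _ _ _ h1' h2', List.reverse_reverse, hΦΦ2]

theorem stmt16 (Φ : List ℕ → List ℕ)
    (h0 : Φ [] = [])
    (hrec : ∀ (l₁ l₂ : List ℕ) (m : ℕ),
      (∀ x ∈ l₁, x < m) → (∀ x ∈ l₂, x < m) →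
      Φ (l₁ ++ m :: l₂) = l₁.reverse ++ m :: Φ l₂) :
    ∀ n : ℕ,
      Set.BijOn Φ
        {l : List ℕ | l.Perm (List.range' 1 n) ∧ listOcc12_3 l = 0}
        {l : List ℕ | l.Perm (List.range' 1 n) ∧ listOcc21_3 l = 0} ∧
      ∀ l : List ℕ, l.Perm (List.range' 1 n) → listOcc12_3 l = 0 →
        Φ (Φ l) = l := by
  intro n
  have hndR : (List.range' 1 n).Nodup := List.nodup_range'
  have key12 : ∀ l : List ℕ, l.Perm (List.range' 1 n) → listOcc12_3 l = 0 →
      (Φ l).Perm l ∧ Avoid21 (Φ l) ∧ Φ (Φ l) = l := by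
    intro l hp hocc
    exact (key Φ h0 hrec l.length l le_rfl (hp.nodup_iff.mpr hndR)).1
      ((occ12_zero l).mp hocc)
  have key21 : ∀ l : List ℕ, l.Perm (List.range' 1 n) → listOcc21_3 l = 0 →
      (Φ l).Perm l ∧ Avoid12 (Φ l) ∧ Φ (Φ l) = l := by
    intro l hp hocc
    exact (key Φ h0 hrec l.length l le_rfl (hp.nodup_iff.mpr hndR)).2
      ((occ21_zero l).mp hocc)
  constructor
  · refine ⟨?_, ?_, ?_⟩
    · intro l hl
      obtain ⟨hp, hocc⟩ := hl
      obtain ⟨hperm, hA, _⟩ := key12 l hp hocc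
      exact ⟨hperm.trans hp, (occ21_zero _).mpr hA⟩
    · intro a ha b hb hab
      obtain ⟨hpa, hocca⟩ := ha
      obtain ⟨hpb, hoccb⟩ := hb
      have h1 := (key12 a hpa hocca).2.2
      have h2 := (key12 b hpb hoccb).2.2
      rw [← h1, hab, h2]
    · intro l hl
      obtain ⟨hp, hocc⟩ := hl
      obtain ⟨hperm, hA, hΦΦ⟩ := key21 l hp hocc
      refine ⟨Φ l, ⟨hperm.trans hp, (occ12_zero _).mpr hA⟩, hΦΦ⟩
  · intro l hp hocc
    exact (key12 l hp hocc).2.2
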